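/- Let P be a continuous probability transition kernel on a finite nonempty alphabet G and let φ_P be its update rule. Then for every u ∈ [0,1), the map w ↦ φ_P(u, w) is continuous from G^{-ℕ+} to the discrete space G, i.e., it is locally constant: for every history w there exists k ∈ ℕ such that φ_P(u, z) = φ_P(u, w) for every history z whose last k symbols agree with those of w. -/

import Mathlib

open Finset Filter

variable {G : Type*}

/-- The ball of all histories admitting `s` as a suffix.
A history is `w : ℕ → G`, index `i` encoding the symbol `w_{-(i+1)}` (index 0 = most recent).
A word `s : List G` encodes `(s_{-n},…,s_{-1})` with list index `i` = symbol `s_{-(i+1)}`. -/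
def tree (s : List G) : Set (ℕ → G) := {w | ∀ i : Fin s.length, w i = s.get i}

/-- The word `w_{-k:-1}` formed by the last `k` symbols of the history `w`. -/
def word (w : ℕ → G) (k : ℕ) : List G := List.ofFn fun i : Fin k => w i

/-- A probability transition kernel on `G`. -/
def IsKernel [Fintype G] (P : (ℕ → G) → G → ℝ) : Prop :=
  ∀ w, (∀ g, 0 ≤ P w g) ∧ ∑ g, P w g = 1

/-- Total variation distance between distributions on a finite alphabet. -/
noncomputable def tvDist [Fintype G] (p q : G → ℝ) : ℝ := (1 / 2) * ∑ a, |p a - q a|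

/-- Oscillation `η_P(s)` of the kernel `P` on the ball `tree s`. -/
noncomputable def eta [Fintype G] (P : (ℕ → G) → G → ℝ) (s : List G) : ℝ :=
  ⨆ w : tree s, ⨆ z : tree s, tvDist (P w) (P z)

/-- Coupling coefficient `a_{|s|}(g|s)`. -/
noncomputable def aCoef (P : (ℕ → G) → G → ℝ) (g : G) (s : List G) : ℝ :=
  ⨅ w : tree s, P w g

/-- Coupling coefficient `A_{|s|}(s)`. -/
noncomputable def ACoef [Fintype G] (P : (ℕ → G) → G → ℝ) (s : List G) : ℝ :=
  ∑ g, aCoef P g s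

/-- `A_k^- = inf { A_k(s) : |s| = k }`. -/
noncomputable def Aminus [Fintype G] (P : (ℕ → G) → G → ℝ) (k : ℕ) : ℝ :=
  ⨅ s : {s : List G // s.length = k}, ACoef P s.1

/-- Continuity of the kernel: continuity from the product topology (G discrete) to
the total variation distance. -/
def KernelContinuous [Fintype G] (P : (ℕ → G) → G → ℝ) : Prop :=
  ∀ w : ℕ → G, ∀ ε > 0, ∃ k : ℕ, ∀ z : ℕ → G, (∀ i < k, z i = w i) → tvDist (P w) (P z) < ε

/-- `α_k(g | w_{-k:-1})` with the convention `A_{-1}(ε) = a_{-1}(·|ε) = 0`. -/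
noncomputable def alphaCoef [Fintype G] [LinearOrder G] (P : (ℕ → G) → G → ℝ)
    (k : ℕ) (g : G) (w : ℕ → G) : ℝ :=
  (if k = 0 then 0 else ACoef P (word w (k - 1))) +
    ∑ h ∈ univ.filter (fun h => h < g),
      (aCoef P h (word w k) - if k = 0 then 0 else aCoef P h (word w (k - 1)))

/-- `β_k(g | w_{-k:-1})` with the convention `A_{-1}(ε) = a_{-1}(·|ε) = 0`. -/
noncomputable def betaCoef [Fintype G] [LinearOrder G] (P : (ℕ → G) → G → ℝ)
    (k : ℕ) (g : G) (w : ℕ → G) : ℝ :=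
  (if k = 0 then 0 else ACoef P (word w (k - 1))) +
    ∑ h ∈ univ.filter (fun h => h ≤ g),
      (aCoef P h (word w k) - if k = 0 then 0 else aCoef P h (word w (k - 1)))

/-- `φ` is the update rule of `P`: for every `u ∈ [0,1)` and history `w`, `φ u w` is the
(unique) symbol `g` such that `α_k(g|w_{-k:-1}) ≤ u < β_k(g|w_{-k:-1})` for some `k`. -/
def IsUpdateRule [Fintype G] [LinearOrder G] (P : (ℕ → G) → G → ℝ)
    (φ : ℝ → (ℕ → G) → G) : Prop :=
  ∀ u ∈ Set.Ico (0 : ℝ) 1, ∀ w : ℕ → G, ∃ k : ℕ,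
    alphaCoef P k (φ u w) w ≤ u ∧ u < betaCoef P k (φ u w) w

section Aux

variable [Fintype G] {P : (ℕ → G) → G → ℝ}

lemma tree_nonempty' [Nonempty G] (s : List G) : (tree s).Nonempty := by
  classical
  refine ⟨fun i => if h : i < s.length then s.get ⟨i, h⟩ else Classical.arbitrary G, fun i => ?_⟩
  show (if h : (i : ℕ) < s.length then s.get ⟨i, h⟩ else Classical.arbitrary G) = s.get i
  rw [dif_pos i.isLt]

lemma mem_tree_word' {z w : ℕ → G} {k : ℕ} : z ∈ tree (word w k) ↔ ∀ i < k, z i = w i := by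
  constructor
  · intro h i hi
    have := h ⟨i, by simpa [word] using hi⟩
    simpa [word, List.get_ofFn] using this
  · intro h i
    have hi : (i : ℕ) < k := by simpa [word] using i.isLt
    have := h i hi
    exact this.trans (List.get_ofFn (fun j : Fin k => w j) i).symm

lemma word_eq' {z w : ℕ → G} {k : ℕ} (h : ∀ i < k, z i = w i) : word z k = word w k := by
  unfold word
  congr 1
  funext i
  exact h i i.isLt

lemma tree_word_anti' {w : ℕ → G} {j k : ℕ} (hjk : j ≤ k) :
    tree (word w k) ⊆ tree (word w j) := by
  intro z hz
  rw [mem_tree_word'] at hz ⊢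
  exact fun i hi => hz i (lt_of_lt_of_le hi hjk)

lemma aCoef_nonneg' (hP : IsKernel P) (g : G) (s : List G) : 0 ≤ aCoef P g s :=
  Real.iInf_nonneg fun w => (hP w).1 g

lemma aCoef_bddBelow' (hP : IsKernel P) (g : G) (s : List G) :
    BddBelow (Set.range fun w : tree s => P w g) := by
  refine ⟨0, ?_⟩
  rintro x ⟨w, rfl⟩
  exact (hP w).1 g

lemma aCoef_anti' [Nonempty G] (hP : IsKernel P) {s t : List G} (hst : tree s ⊆ tree t) (g : G) :
    aCoef P g t ≤ aCoef P g s := by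
  haveI := (tree_nonempty' s).to_subtype
  exact le_ciInf fun w => ciInf_le (aCoef_bddBelow' hP g t) ⟨w.1, hst w.2⟩

lemma inc_nonneg' [Nonempty G] (hP : IsKernel P) (w : ℕ → G) (k : ℕ) (h : G) :
    0 ≤ aCoef P h (word w k) - (if k = 0 then 0 else aCoef P h (word w (k - 1))) := by
  rcases Nat.eq_zero_or_pos k with rfl | hk
  · simpa using aCoef_nonneg' hP h (word w 0)
  · rw [if_neg (Nat.pos_iff_ne_zero.mp hk)]
    have := aCoef_anti' hP (tree_word_anti' (w := w) (Nat.sub_le k 1)) h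
    linarith

lemma alpha_le_beta' [Nonempty G] [LinearOrder G] (hP : IsKernel P) (k : ℕ) (g : G) (w : ℕ → G) :
    alphaCoef P k g w ≤ betaCoef P k g w := by
  unfold alphaCoef betaCoef
  have hsub : univ.filter (fun h => h < g) ⊆ univ.filter (fun h => h ≤ g) := by
    intro h hh
    simp only [mem_filter, mem_univ, true_and] at hh ⊢
    exact le_of_lt hh
  have := Finset.sum_le_sum_of_subset_of_nonneg hsub (fun h _ _ => inc_nonneg' hP w k h)
  linarith

lemma beta_le_alpha_same' [Nonempty G] [LinearOrder G] (hP : IsKernel P) {k : ℕ} {g g' : G}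
    (hgg : g < g') (w : ℕ → G) : betaCoef P k g w ≤ alphaCoef P k g' w := by
  unfold alphaCoef betaCoef
  have hsub : univ.filter (fun h => h ≤ g) ⊆ univ.filter (fun h => h < g') := by
    intro h hh
    simp only [mem_filter, mem_univ, true_and] at hh ⊢
    exact lt_of_le_of_lt hh hgg
  have := Finset.sum_le_sum_of_subset_of_nonneg hsub (fun h _ _ => inc_nonneg' hP w k h)
  linarith

lemma beta_le_A' [Nonempty G] [LinearOrder G] (hP : IsKernel P) (k : ℕ) (g : G) (w : ℕ → G) :
    betaCoef P k g w ≤ ACoef P (word w k) := by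
  have h1 : ∑ h ∈ univ.filter (fun h => h ≤ g),
      (aCoef P h (word w k) - if k = 0 then 0 else aCoef P h (word w (k - 1)))
      ≤ ∑ h, (aCoef P h (word w k) - if k = 0 then 0 else aCoef P h (word w (k - 1))) :=
    Finset.sum_le_sum_of_subset_of_nonneg (filter_subset _ _)
      (fun h _ _ => inc_nonneg' hP w k h)
  have h2 : ∑ h, (aCoef P h (word w k) - if k = 0 then 0 else aCoef P h (word w (k - 1)))
      = ACoef P (word w k) - (if k = 0 then 0 else ACoef P (word w (k - 1))) := by
    rw [Finset.sum_sub_distrib]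
    unfold ACoef
    split <;> simp
  unfold betaCoef
  linarith

lemma A_le_alpha' [Nonempty G] [LinearOrder G] (hP : IsKernel P) (k : ℕ) (g : G) (w : ℕ → G) :
    (if k = 0 then 0 else ACoef P (word w (k - 1))) ≤ alphaCoef P k g w := by
  unfold alphaCoef
  have : (0:ℝ) ≤ ∑ h ∈ univ.filter (fun h => h < g),
      (aCoef P h (word w k) - if k = 0 then 0 else aCoef P h (word w (k - 1))) :=
    Finset.sum_nonneg fun h _ => inc_nonneg' hP w k h
  linarith

lemma A_mono' [Nonempty G] (hP : IsKernel P) {j k : ℕ} (hjk : j ≤ k) (w : ℕ → G) :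
    ACoef P (word w j) ≤ ACoef P (word w k) := by
  unfold ACoef
  exact Finset.sum_le_sum fun g _ => aCoef_anti' hP (tree_word_anti' hjk) g

lemma beta_le_alpha_lt' [Nonempty G] [LinearOrder G] (hP : IsKernel P) {k k' : ℕ}
    (hkk : k < k') (g g' : G) (w : ℕ → G) : betaCoef P k g w ≤ alphaCoef P k' g' w := by
  have h1 := beta_le_A' hP k g w
  have h2 : ACoef P (word w k) ≤ ACoef P (word w (k' - 1)) :=
    A_mono' hP (Nat.le_sub_one_of_lt hkk) w
  have h3 := A_le_alpha' hP k' g' w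
  rw [if_neg (by omega : k' ≠ 0)] at h3
  linarith

lemma uniq' [Nonempty G] [LinearOrder G] (hP : IsKernel P) {u : ℝ} {k k' : ℕ} {g g' : G}
    {w : ℕ → G} (h1 : alphaCoef P k g w ≤ u) (h2 : u < betaCoef P k g w)
    (h3 : alphaCoef P k' g' w ≤ u) (h4 : u < betaCoef P k' g' w) : g = g' := by
  rcases lt_trichotomy k k' with hk | rfl | hk
  · have := beta_le_alpha_lt' hP hk g g' w; linarith
  · rcases lt_trichotomy g g' with hg | rfl | hg
    · have := beta_le_alpha_same' hP (k := k) hg w; linarith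
    · rfl
    · have := beta_le_alpha_same' hP (k := k) hg w; linarith
  · have := beta_le_alpha_lt' hP hk g' g w; linarith

lemma alpha_congr' [LinearOrder G] {z w : ℕ → G} {k : ℕ} (h : ∀ i < k, z i = w i) (g : G) :
    alphaCoef P k g z = alphaCoef P k g w := by
  have h1 : word z k = word w k := word_eq' h
  have h2 : word z (k - 1) = word w (k - 1) :=
    word_eq' fun i hi => h i (lt_of_lt_of_le hi (Nat.sub_le k 1))
  unfold alphaCoef
  rw [h1, h2]

lemma beta_congr' [LinearOrder G] {z w : ℕ → G} {k : ℕ} (h : ∀ i < k, z i = w i) (g : G) :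
    betaCoef P k g z = betaCoef P k g w := by
  have h1 : word z k = word w k := word_eq' h
  have h2 : word z (k - 1) = word w (k - 1) :=
    word_eq' fun i hi => h i (lt_of_lt_of_le hi (Nat.sub_le k 1))
  unfold betaCoef
  rw [h1, h2]

end Aux

/-- Lemma 1 (phiPC): for every `u ∈ [0,1)`, the map `w ↦ φ_P(u, w)` is continuous from
`G^{-ℕ+}` to the discrete space `G`, i.e. locally constant: for every history `w` there is
`k` such that `φ_P(u, z) = φ_P(u, w)` whenever the last `k` symbols of `z` and `w` agree. -/
theorem stmt_6 [Fintype G] [Nonempty G] [LinearOrder G] (P : (ℕ → G) → G → ℝ)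
    (hP : IsKernel P) (hc : KernelContinuous P)
    (φ : ℝ → (ℕ → G) → G) (hφ : IsUpdateRule P φ) :
    ∀ u ∈ Set.Ico (0 : ℝ) 1, ∀ w : ℕ → G, ∃ k : ℕ,
      ∀ z : ℕ → G, (∀ i < k, z i = w i) → φ u z = φ u w := by
  intro u hu w
  obtain ⟨k, hα, hβ⟩ := hφ u hu w
  refine ⟨k, fun z hz => ?_⟩
  obtain ⟨k', hα', hβ'⟩ := hφ u hu z
  have e1 : alphaCoef P k (φ u w) z = alphaCoef P k (φ u w) w := alpha_congr' hz _
  have e2 : betaCoef P k (φ u w) z = betaCoef P k (φ u w) w := beta_congr' hz _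
  exact uniq' hP hα' hβ' (e1 ▸ hα) (e2 ▸ hβ)
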